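/- arXiv:1307.8411 — 4 statements merged into one kernel-verified Lean document; each statement's English description precedes it below -/
import Mathlib

section
/- Let A, B : X → Y be bounded linear operators between Banach spaces with dim N(A) < ∞, N(A) ∩ N(B) = {0}, and Y = B·N(A) ⊕ R(A). Then A + εB is invertible for all sufficiently small ε > 0. -/
/-- If `A, B : X →L[ℝ] Y` with `dim N(A) < ∞`,
`N(A) ∩ N(B) = {0}` and `Y = B·N(A) ⊕ R(A)`, then `A + εB` is invertible
(bijective, hence boundedly invertible by the open mapping theorem)
for all sufficiently small `ε > 0`. -/
theorem stmt2
    {X Y : Type*} [NormedAddCommGroup X] [NormedSpace ℝ X] [CompleteSpace X]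
    [NormedAddCommGroup Y] [NormedSpace ℝ Y] [CompleteSpace Y]
    (A B : X →L[ℝ] Y)
    (hfin : FiniteDimensional ℝ (LinearMap.ker (A : X →ₗ[ℝ] Y)))
    (hker : LinearMap.ker (A : X →ₗ[ℝ] Y) ⊓ LinearMap.ker (B : X →ₗ[ℝ] Y) = ⊥)
    (hsum : IsCompl (Submodule.map (B : X →ₗ[ℝ] Y) (LinearMap.ker (A : X →ₗ[ℝ] Y))) (LinearMap.range (A : X →ₗ[ℝ] Y))) :
    ∃ ε₀ > (0 : ℝ), ∀ ε : ℝ, 0 < ε → ε < ε₀ →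
      Function.Bijective (A + ε • B) := by
  classical
  set K := LinearMap.ker (A : X →ₗ[ℝ] Y) with hK
  -- continuous projection onto K
  obtain ⟨f, hf⟩ := Submodule.ClosedComplemented.of_finiteDimensional (F := X) K
  set P : X →L[ℝ] X := K.subtypeL.comp f with hP
  have hPmem : ∀ x : X, P x ∈ K := fun x => (f x).2
  have hPid : ∀ x : X, x ∈ K → P x = x := by
    intro x hx
    have h1 : f x = ⟨x, hx⟩ := hf ⟨x, hx⟩
    simp [hP, h1]
  have hAP : ∀ x : X, A (P x) = 0 := fun x => hPmem x
  have hPP : ∀ x : X, P (P x) = P x := fun x => hPid _ (hPmem x)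
  -- the comparison operator Φ = A + B ∘ P
  set Φ : X →L[ℝ] Y := A + B.comp P with hΦ
  have hΦapp : ∀ x, Φ x = A x + B (P x) := fun x => rfl
  -- Φ is injective
  have hΦinj : LinearMap.ker (Φ : X →ₗ[ℝ] Y) = ⊥ := by
    rw [LinearMap.ker_eq_bot']
    intro x hx
    have hx' : A x + B (P x) = 0 := hx
    have hBP : B (P x) = -(A x) := by
      rw [add_comm] at hx'
      rw [add_eq_zero_iff_eq_neg] at hx'
      exact hx'
    have hmem : B (P x) ∈ Submodule.map (B : X →ₗ[ℝ] Y) K ⊓ LinearMap.range (A : X →ₗ[ℝ] Y) := by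
      refine ⟨⟨P x, hPmem x, rfl⟩, ⟨-x, ?_⟩⟩
      rw [map_neg, hBP]; rfl
    rw [hsum.inf_eq_bot] at hmem
    have hBP0 : B (P x) = 0 := hmem
    have hAx : A x = 0 := by
      have := hBP.symm.trans hBP0
      simpa using this
    have hxK : x ∈ K := hAx
    have hBx : B x = 0 := by
      have := hPid x hxK
      rw [this] at hBP0
      exact hBP0
    have : x ∈ K ⊓ LinearMap.ker (B : X →ₗ[ℝ] Y) := ⟨hxK, hBx⟩
    rw [hker] at this
    exact this
  -- Φ is surjective
  have hΦsurj : LinearMap.range (Φ : X →ₗ[ℝ] Y) = ⊤ := by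
    rw [LinearMap.range_eq_top]
    intro y
    have hy : y ∈ Submodule.map (B : X →ₗ[ℝ] Y) K ⊔ LinearMap.range (A : X →ₗ[ℝ] Y) := by
      rw [hsum.sup_eq_top]; trivial
    obtain ⟨b, hb, a, ha, hba⟩ := Submodule.mem_sup.mp hy
    obtain ⟨n, hn, rfl⟩ := hb
    obtain ⟨m, rfl⟩ := ha
    refine ⟨(m - P m) + n, ?_⟩
    have hnK : n ∈ K := hn
    have hAn : A n = 0 := hnK
    have h1 : A ((m - P m) + n) = A m := by
      simp [map_add, map_sub, hAP m, hAn]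
    have h2 : P ((m - P m) + n) = n := by
      simp [map_add, map_sub, hPP m, hPid n hnK]
    rw [ContinuousLinearMap.coe_coe, hΦapp, h1, h2, add_comm]
    exact hba
  -- Φ as a continuous linear equivalence (open mapping theorem)
  set e : X ≃L[ℝ] Y := ContinuousLinearEquiv.ofBijective Φ hΦinj hΦsurj with he
  have heapp : ∀ x, e x = Φ x := fun x => rfl
  -- the perturbation direction
  set C : X →L[ℝ] Y := B.comp (1 - P) with hC
  set D : X →L[ℝ] X := (e.symm : Y →L[ℝ] X).comp C with hD
  set c : ℝ := ‖D‖ with hc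
  refine ⟨1 / (c + 1), by positivity, ?_⟩
  intro ε hε hεlt
  have hεne : ε ≠ 0 := ne_of_gt hε
  -- (1) the operator T = 1 - (1-ε)•P is bijective
  set T : X →L[ℝ] X := 1 - (1 - ε) • P with hT
  set T' : X →L[ℝ] X := 1 - (1 - ε⁻¹) • P with hT'
  have hTT' : ∀ x, T (T' x) = x := by
    intro x
    simp only [hT, hT', ContinuousLinearMap.sub_apply, ContinuousLinearMap.one_apply,
      ContinuousLinearMap.smul_apply, map_sub, map_smul, hPP]
    rw [smul_sub, smul_smul]
    have h1 : (1 - ε⁻¹) * (1 - ε) = 1 - ε - ε⁻¹ + 1 := by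
      field_simp; ring
    rw [h1]
    module
  have hT'T : ∀ x, T' (T x) = x := by
    intro x
    simp only [hT, hT', ContinuousLinearMap.sub_apply, ContinuousLinearMap.one_apply,
      ContinuousLinearMap.smul_apply, map_sub, map_smul, hPP]
    rw [smul_sub, smul_smul]
    have h1 : (1 - ε) * (1 - ε⁻¹) = 1 - ε - ε⁻¹ + 1 := by
      field_simp; ring
    rw [h1]
    module
  have hTbij : Function.Bijective T :=
    Function.bijective_iff_has_inverse.mpr ⟨T', hT'T, hTT'⟩
  -- (2) the operator Φ + ε•C is bijective (small perturbation of Φ)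
  have hnorm : ‖(-(ε • D) : X →L[ℝ] X)‖ < 1 := by
    have h0 : ‖(-(ε • D) : X →L[ℝ] X)‖ = ε * c := by
      rw [norm_neg, norm_smul ε D, Real.norm_eq_abs, abs_of_pos hε]
    rw [h0]
    calc ε * c ≤ ε * c + ε := le_add_of_nonneg_right (le_of_lt hε)
      _ = ε * (c + 1) := by ring
      _ < (1 / (c + 1)) * (c + 1) := by
          apply mul_lt_mul_of_pos_right hεlt; positivity
      _ = 1 := by rw [one_div_mul_cancel (by positivity)]
  set u : (X →L[ℝ] X)ˣ := Units.oneSub (-(ε • D)) hnorm with hu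
  have huval : (u : X →L[ℝ] X) = 1 + ε • D := by
    simp [hu, Units.val_oneSub, sub_neg_eq_add]
  have hubij : Function.Bijective (u : X →L[ℝ] X) := by
    refine Function.bijective_iff_has_inverse.mpr ⟨(↑u⁻¹ : X →L[ℝ] X), ?_, ?_⟩
    · intro x
      have := u.inv_mul
      calc (↑u⁻¹ : X →L[ℝ] X) ((u : X →L[ℝ] X) x)
          = ((↑u⁻¹ * ↑u : X →L[ℝ] X)) x := rfl
        _ = (1 : X →L[ℝ] X) x := by rw [u.inv_mul]
        _ = x := rfl
    · intro x
      calc (u : X →L[ℝ] X) ((↑u⁻¹ : X →L[ℝ] X) x)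
          = ((↑u * ↑u⁻¹ : X →L[ℝ] X)) x := rfl
        _ = (1 : X →L[ℝ] X) x := by rw [u.mul_inv]
        _ = x := rfl
  have hΦC : ∀ x, (Φ + ε • C) x = e ((u : X →L[ℝ] X) x) := by
    intro x
    rw [huval]
    simp only [ContinuousLinearMap.add_apply, ContinuousLinearMap.smul_apply,
      ContinuousLinearMap.one_apply, map_add, map_smul]
    have h1 : e (D x) = C x := by
      simp only [hD, ContinuousLinearMap.comp_apply]
      exact e.apply_symm_apply (C x)
    rw [h1, heapp]
  have hΦCbij : Function.Bijective (Φ + ε • C) := by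
    have : ⇑(Φ + ε • C) = ⇑e ∘ ⇑(u : X →L[ℝ] X) := funext hΦC
    rw [this]
    exact e.bijective.comp hubij
  -- (3) A + ε•B = (Φ + ε•C) ∘ T
  have hfact : ∀ x, (A + ε • B) x = (Φ + ε • C) (T x) := by
    intro x
    simp only [hT, hΦapp, hC, ContinuousLinearMap.add_apply, ContinuousLinearMap.smul_apply,
      ContinuousLinearMap.sub_apply, ContinuousLinearMap.one_apply,
      ContinuousLinearMap.comp_apply, map_sub, map_smul, hPP, hAP, sub_self, smul_zero,
      zero_add, add_zero, sub_zero, zero_sub, map_zero]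
    module
  have : ⇑(A + ε • B) = ⇑(Φ + ε • C) ∘ ⇑T := funext hfact
  rw [this]
  exact hΦCbij.comp hTbij
end

section
/- Let A, B : X → Y be bounded linear operators between Banach spaces with dim N(A) < ∞, N(A) ∩ N(B) = {0}, and Y = B·N(A) ⊕ R(A) with projector P onto B·N(A) along R(A). Let B* : B·N(A) → N(A) be the inverse of the restriction of B to N(A). Then for every b ∈ Y there exist u, w ∈ X such that (A + εB)(u + (1/ε)w) → b as ε → 0; namely one may take w = B*Pb ∈ N(A) and u any preimage under A of (Id − P)b. -/
open Filter Topology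

/-- Under the hypotheses of the perturbation lemma, with `P` the
projector onto `B·N(A)` along `R(A)`, for every `b ∈ Y` there are `u, w`
(namely `w = B*Pb ∈ N(A)` and `u` a preimage under `A` of `(Id - P) b`)
such that `(A + εB)(u + ε⁻¹ w) → b` as `ε → 0`. -/
theorem stmt3
    {X Y : Type*} [NormedAddCommGroup X] [NormedSpace ℝ X] [CompleteSpace X]
    [NormedAddCommGroup Y] [NormedSpace ℝ Y] [CompleteSpace Y]
    (A B : X →L[ℝ] Y) (P : Y →L[ℝ] Y)
    (hfin : FiniteDimensional ℝ (LinearMap.ker (A : X →ₗ[ℝ] Y)))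
    (hker : LinearMap.ker (A : X →ₗ[ℝ] Y) ⊓ LinearMap.ker (B : X →ₗ[ℝ] Y) = ⊥)
    (hP : P.comp P = P)
    (hPrange : LinearMap.range (P : Y →ₗ[ℝ] Y) = Submodule.map (B : X →ₗ[ℝ] Y) (LinearMap.ker (A : X →ₗ[ℝ] Y)))
    (hPker : LinearMap.ker (P : Y →ₗ[ℝ] Y) = LinearMap.range (A : X →ₗ[ℝ] Y)) :
    ∀ b : Y, ∃ u w : X,
      w ∈ LinearMap.ker (A : X →ₗ[ℝ] Y) ∧ B w = P b ∧ A u = b - P b ∧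
      Tendsto (fun ε : ℝ => (A + ε • B) (u + ε⁻¹ • w)) (𝓝[>] 0) (𝓝 b) := by
  intro b
  -- P b ∈ range P = B '' ker A
  have hPb : P b ∈ Submodule.map (B : X →ₗ[ℝ] Y) (LinearMap.ker (A : X →ₗ[ℝ] Y)) := by
    rw [← hPrange]; exact ⟨b, rfl⟩
  obtain ⟨w, hwker, hwB⟩ := hPb
  -- b - P b ∈ ker P = range A
  have hbP : b - P b ∈ LinearMap.range (A : X →ₗ[ℝ] Y) := by
    rw [← hPker]
    have : P (P b) = P b := by
      have := congrArg (fun f : Y →L[ℝ] Y => f b) hP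
      simpa using this
    simp [LinearMap.mem_ker, map_sub, this]
  obtain ⟨u, hu⟩ := hbP
  refine ⟨u, w, hwker, hwB, hu, ?_⟩
  have hAw : A w = 0 := hwker
  have key : ∀ ε : ℝ, ε ≠ 0 →
      (A + ε • B) (u + ε⁻¹ • w) = b + ε • B u := by
    intro ε hε
    simp only [ContinuousLinearMap.add_apply, ContinuousLinearMap.smul_apply,
      map_add, map_smul, hAw, hwB, hu, smul_zero, add_zero, smul_smul,
      mul_inv_cancel₀ hε, inv_mul_cancel₀ hε, neg_smul, one_smul, smul_add]
    rw [show A u = b - P b from hu, show B w = P b from hwB]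
    abel
  have h1 : Tendsto (fun ε : ℝ => b + ε • B u) (𝓝[>] 0) (𝓝 b) := by
    have : Tendsto (fun ε : ℝ => b + ε • B u) (𝓝 0) (𝓝 (b + (0:ℝ) • B u)) := by
      exact tendsto_const_nhds.add ((continuous_id.smul continuous_const).tendsto 0)
    simpa using this.mono_left nhdsWithin_le_nhds
  refine h1.congr' ?_
  filter_upwards [self_mem_nhdsWithin] with ε (hε : 0 < ε)
  exact (key ε hε.ne').symm
end

section
/- Let A, B : X → Y be bounded linear operators between Banach spaces with dim N(A) < ∞, N(A) ∩ N(B) = {0}, and Y = B·N(A) ⊕ R(A) with projectors P (onto B·N(A)) and Id − P (onto R(A)). Let X̂ ⊆ X be a complement of N(A), A* : R(A) → X̂ the inverse of A restricted to X̂, and B* : B·N(A) → N(A) the inverse of B restricted to N(A). Then ‖(A*(Id−P) + (1/ε)B*P) − (A + εB)⁻¹‖ = O(1) as ε → 0. -/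
set_option maxHeartbeats 1000000


/-- With `P` the projector onto `B·N(A)` along `R(A)`,
`Q` the projector onto `N(A)` along the complement `X̂`,
`S = A*(Id - P)` (where `A* : R(A) → X̂` inverts `A|_X̂`) and
`T = B*P` (where `B* : B·N(A) → N(A)` inverts `B|_N(A)`), one has
`‖(A*(Id-P) + ε⁻¹ B*P) - (A + εB)⁻¹‖ = O(1)` as `ε → 0`. -/
theorem stmt4
    {X Y : Type*} [NormedAddCommGroup X] [NormedSpace ℝ X] [CompleteSpace X]
    [NormedAddCommGroup Y] [NormedSpace ℝ Y] [CompleteSpace Y]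
    (A B : X →L[ℝ] Y) (P : Y →L[ℝ] Y) (Q : X →L[ℝ] X) (S T : Y →L[ℝ] X)
    (hfin : FiniteDimensional ℝ (LinearMap.ker (A : X →ₗ[ℝ] Y)))
    (hker : LinearMap.ker (A : X →ₗ[ℝ] Y) ⊓ LinearMap.ker (B : X →ₗ[ℝ] Y) = ⊥)
    (hP : P.comp P = P)
    (hPrange : LinearMap.range (P : Y →ₗ[ℝ] Y) = Submodule.map (B : X →ₗ[ℝ] Y) (LinearMap.ker (A : X →ₗ[ℝ] Y)))
    (hPker : LinearMap.ker (P : Y →ₗ[ℝ] Y) = LinearMap.range (A : X →ₗ[ℝ] Y))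
    (hQ : Q.comp Q = Q)
    (hQrange : LinearMap.range (Q : X →ₗ[ℝ] X) = LinearMap.ker (A : X →ₗ[ℝ] Y))
    -- `S` realizes `A*(Id - P)`: it lands in `X̂ = ker Q` and inverts `A` on `R(A)`
    (hS1 : ∀ y : Y, Q (S y) = 0)
    (hS2 : ∀ y : Y, A (S y) = y - P y)
    (hS3 : ∀ y : Y, S (P y) = 0)
    -- `T` realizes `B*P`: it lands in `N(A)` and inverts `B` on `B·N(A)`
    (hT1 : ∀ y : Y, T y ∈ LinearMap.ker (A : X →ₗ[ℝ] Y))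
    (hT2 : ∀ y : Y, B (T y) = P y) :
    ∃ C > (0 : ℝ), ∃ ε₀ > (0 : ℝ), ∀ ε : ℝ, 0 < ε → ε < ε₀ →
      ∃ inv : Y →L[ℝ] X,
        inv.comp (A + ε • B) = ContinuousLinearMap.id ℝ X ∧
        (A + ε • B).comp inv = ContinuousLinearMap.id ℝ Y ∧
        ‖(S + ε⁻¹ • T) - inv‖ ≤ C := by
  -- basic projection facts
  have hQidem : ∀ x : X, Q (Q x) = Q x := fun x => by
    have := ContinuousLinearMap.ext_iff.mp hQ x
    simpa using this
  have hQfix : ∀ x : X, x ∈ LinearMap.ker (A : X →ₗ[ℝ] Y) → Q x = x := by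
    intro x hx
    rw [← hQrange] at hx
    obtain ⟨z, rfl⟩ := hx
    exact hQidem z
  have hPidem : ∀ y : Y, P (P y) = P y := fun y => by
    have := ContinuousLinearMap.ext_iff.mp hP y
    simpa using this
  have hPfix : ∀ y : Y, y ∈ Submodule.map (B : X →ₗ[ℝ] Y) (LinearMap.ker (A : X →ₗ[ℝ] Y)) → P y = y := by
    intro y hy
    rw [← hPrange] at hy
    obtain ⟨z, rfl⟩ := hy
    exact hPidem z
  have hPA : ∀ x : X, P (A x) = 0 := by
    intro x
    have : A x ∈ LinearMap.ker (P : Y →ₗ[ℝ] Y) := by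
      rw [hPker]; exact ⟨x, rfl⟩
    exact this
  have hQmem : ∀ x : X, A (Q x) = 0 := by
    intro x
    have : Q x ∈ LinearMap.ker (A : X →ₗ[ℝ] Y) := by
      rw [← hQrange]; exact ⟨x, rfl⟩
    exact this
  have hbot : ∀ x : X, x ∈ LinearMap.ker (A : X →ₗ[ℝ] Y) → x ∈ LinearMap.ker (B : X →ₗ[ℝ] Y) → x = 0 := by
    intro x h1 h2
    have : x ∈ LinearMap.ker (A : X →ₗ[ℝ] Y) ⊓ LinearMap.ker (B : X →ₗ[ℝ] Y) := ⟨h1, h2⟩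
    rw [hker] at this
    simpa using this
  -- S ∘ A = I - Q
  have hSA : ∀ x : X, S (A x) = x - Q x := by
    intro x
    have h1 : A (S (A x)) = A x := by rw [hS2, hPA, sub_zero]
    have h2 : S (A x) - x ∈ LinearMap.ker (A : X →ₗ[ℝ] Y) := by
      simp only [LinearMap.mem_ker, ContinuousLinearMap.coe_coe, map_sub, h1, sub_self]
    have h3 : Q (S (A x) - x) = S (A x) - x := hQfix _ h2
    have h4 : Q (S (A x) - x) = -Q x := by rw [map_sub, hS1, zero_sub]
    rw [h3] at h4
    have := sub_eq_iff_eq_add.mp h4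
    rw [this, neg_add_eq_sub]
  -- T ∘ A = 0
  have hTA : ∀ x : X, T (A x) = 0 := by
    intro x
    refine hbot _ (hT1 _) ?_
    simp only [LinearMap.mem_ker, ContinuousLinearMap.coe_coe, hT2, hPA]
  -- T (B (Q x)) = Q x
  have hTBQ : ∀ x : X, T (B (Q x)) = Q x := by
    intro x
    have hmem : B (Q x) ∈ Submodule.map (B : X →ₗ[ℝ] Y) (LinearMap.ker (A : X →ₗ[ℝ] Y)) := by
      refine ⟨Q x, ?_, rfl⟩
      rw [← hQrange]; exact ⟨x, rfl⟩
    have h1 : B (T (B (Q x))) = B (Q x) := by rw [hT2, hPfix _ hmem]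
    refine sub_eq_zero.mp (hbot _ ?_ ?_)
    · simp only [LinearMap.mem_ker, ContinuousLinearMap.coe_coe, map_sub, hQmem, sub_zero]
      exact hT1 _
    · simp only [LinearMap.mem_ker, ContinuousLinearMap.coe_coe, map_sub, h1, sub_self]
  -- S (B x) = 0 for x ∈ ker A
  have hSBk : ∀ x : X, A x = 0 → S (B x) = 0 := by
    intro x hx
    have hmem : B x ∈ Submodule.map (B : X →ₗ[ℝ] Y) (LinearMap.ker (A : X →ₗ[ℝ] Y)) := ⟨x, hx, rfl⟩
    rw [← hPfix _ hmem, hS3]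
  -- constants
  set C : ℝ := 2 * (‖(S.comp B).comp S‖ + ‖(T.comp B).comp S‖) + 1 with hC
  have hCpos : 0 < C := by positivity
  set D : ℝ := ‖B.comp S‖ + ‖S.comp B‖ + 1 with hD
  have hDpos : 0 < D := by positivity
  refine ⟨C, hCpos, (2 * D)⁻¹, by positivity, ?_⟩
  intro ε hε hεlt
  have hεD : ε * D < 1 / 2 := by
    rw [lt_div_iff₀ (by norm_num : (0:ℝ) < 2)]
    calc ε * D * 2 < (2 * D)⁻¹ * D * 2 := by
          apply mul_lt_mul_of_pos_right (mul_lt_mul_of_pos_right hεlt hDpos) (by norm_num)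
      _ = 1 := by field_simp
  have hεBS : ε * ‖B.comp S‖ < 1 / 2 := by
    have : ε * ‖B.comp S‖ ≤ ε * D := by
      apply mul_le_mul_of_nonneg_left _ hε.le
      rw [hD]; linarith [norm_nonneg (S.comp B)]
    exact lt_of_le_of_lt this hεD
  have hεSB : ε * ‖S.comp B‖ < 1 := by
    have : ε * ‖S.comp B‖ ≤ ε * D := by
      apply mul_le_mul_of_nonneg_left _ hε.le
      rw [hD]; linarith [norm_nonneg (B.comp S)]
    exact lt_of_le_of_lt this (hεD.trans (by norm_num))
  have hε1 : ε ≤ 1 := by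
    have : ε * 1 ≤ ε * D := by
      apply mul_le_mul_of_nonneg_left _ hε.le
      rw [hD]; linarith [norm_nonneg (B.comp S), norm_nonneg (S.comp B)]
    have h2 : ε * 1 < 1 / 2 := lt_of_le_of_lt this hεD
    linarith
  -- the perturbation M = ε • (B ∘ S), with ‖M‖ < 1
  set M : Y →L[ℝ] Y := ε • (B.comp S) with hM
  have hMnorm : ‖M‖ ≤ ε * ‖B.comp S‖ := by
    rw [hM]
    refine le_trans (ContinuousLinearMap.opNorm_smul_le _ _) ?_
    rw [Real.norm_eq_abs, abs_of_pos hε]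
  have hMlt : ‖(-M : Y →L[ℝ] Y)‖ < 1 := by
    rw [norm_neg]; linarith
  set u : (Y →L[ℝ] Y)ˣ := Units.oneSub (-M) hMlt with hu
  have huval : (u : Y →L[ℝ] Y) = 1 + M := by
    rw [hu, Units.val_oneSub, sub_neg_eq_add]
  -- norm bound on u⁻¹
  have huinv : ((u⁻¹ : (Y →L[ℝ] Y)ˣ) : Y →L[ℝ] Y)
      = 1 - M * ((u⁻¹ : (Y →L[ℝ] Y)ˣ) : Y →L[ℝ] Y) := by
    have h1 : ((u : Y →L[ℝ] Y)) * ((u⁻¹ : (Y →L[ℝ] Y)ˣ) : Y →L[ℝ] Y) = 1 := by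
      rw [← Units.val_mul, mul_inv_cancel, Units.val_one]
    rw [huval, add_mul, one_mul] at h1
    rw [eq_sub_iff_add_eq]
    exact h1
  have huinvnorm : ‖((u⁻¹ : (Y →L[ℝ] Y)ˣ) : Y →L[ℝ] Y)‖ ≤ 2 := by
    set w := ((u⁻¹ : (Y →L[ℝ] Y)ˣ) : Y →L[ℝ] Y)
    have h1 : ‖w‖ ≤ 1 + ‖M‖ * ‖w‖ := by
      calc ‖w‖ = ‖1 - M * w‖ := by rw [← huinv]
        _ ≤ ‖(1 : Y →L[ℝ] Y)‖ + ‖M * w‖ := norm_sub_le _ _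
        _ ≤ 1 + ‖M‖ * ‖w‖ := by
            gcongr
            · exact ContinuousLinearMap.norm_id_le
            · exact norm_mul_le _ _
    have h2 : ‖M‖ * ‖w‖ ≤ (1/2) * ‖w‖ := by
      apply mul_le_mul_of_nonneg_right _ (norm_nonneg w)
      linarith
    linarith
  -- R = S + ε⁻¹ • T and the key identity (A + εB) ∘ R = 1 + M
  set R : Y →L[ℝ] X := S + ε⁻¹ • T with hR
  have hkey : (A + ε • B).comp R = (u : Y →L[ℝ] Y) := by
    rw [huval]
    ext y
    have hεne : ε ≠ 0 := ne_of_gt hε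
    simp only [hR, hM, ContinuousLinearMap.comp_apply, ContinuousLinearMap.add_apply,
      ContinuousLinearMap.smul_apply, ContinuousLinearMap.one_apply, map_add, map_smul]
    rw [hS2, hT2]
    have hAT : A (T y) = 0 := hT1 y
    rw [hAT]
    rw [zero_add, smul_smul, inv_mul_cancel₀ hεne, one_smul]
    abel
  set inv : Y →L[ℝ] X := R.comp ((u⁻¹ : (Y →L[ℝ] Y)ˣ) : Y →L[ℝ] Y) with hinv
  -- right inverse
  have hright : (A + ε • B).comp inv = ContinuousLinearMap.id ℝ Y := by
    rw [hinv, ← ContinuousLinearMap.comp_assoc, hkey]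
    have : (u : Y →L[ℝ] Y).comp ((u⁻¹ : (Y →L[ℝ] Y)ˣ) : Y →L[ℝ] Y)
        = ((u * u⁻¹ : (Y →L[ℝ] Y)ˣ) : Y →L[ℝ] Y) := by
      rw [Units.val_mul]; rfl
    rw [this, mul_inv_cancel, Units.val_one]
    rfl
  -- injectivity of A + εB
  have hinj : ∀ x : X, (A + ε • B) x = 0 → x = 0 := by
    intro x hx
    simp only [ContinuousLinearMap.add_apply, ContinuousLinearMap.smul_apply] at hx
    -- A x = -(ε • B x)
    have hAx : A x = -(ε • B x) := by
      rw [eq_neg_iff_add_eq_zero]; exact hx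
    have hv : x - Q x = -(ε • S (B (x - Q x))) := by
      have h1 : S (A x) = x - Q x := hSA x
      have h2 : S (A x) = -(ε • S (B x)) := by rw [hAx, map_neg, map_smul]
      have h3 : S (B (Q x)) = 0 := hSBk (Q x) (hQmem x)
      have h4 : S (B (x - Q x)) = S (B x) := by
        rw [map_sub, map_sub, h3, sub_zero]
      rw [h4, ← h2, h1]
    have hvnorm : ‖x - Q x‖ ≤ ε * ‖S.comp B‖ * ‖x - Q x‖ := by
      calc ‖x - Q x‖ = ‖-(ε • S (B (x - Q x)))‖ := by rw [← hv]
        _ = ε * ‖S (B (x - Q x))‖ := by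
            rw [norm_neg, norm_smul, Real.norm_eq_abs, abs_of_pos hε]
        _ = ε * ‖(S.comp B) (x - Q x)‖ := rfl
        _ ≤ ε * (‖S.comp B‖ * ‖x - Q x‖) := by
            apply mul_le_mul_of_nonneg_left ((S.comp B).le_opNorm _) hε.le
        _ = ε * ‖S.comp B‖ * ‖x - Q x‖ := by ring
    have hv0 : x - Q x = 0 := by
      by_contra hne
      have hpos : 0 < ‖x - Q x‖ := norm_pos_iff.mpr (sub_ne_zero.mpr fun h => hne (sub_eq_zero.mpr h))
      nlinarith
    have hxQ : x = Q x := by rwa [sub_eq_zero] at hv0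
    have hAx0 : A x = 0 := by rw [hxQ]; exact hQmem x
    have hBx0 : B x = 0 := by
      have : ε • B x = 0 := by
        have := hx; rw [hAx0, zero_add] at this; exact this
      exact (smul_eq_zero.mp this).resolve_left (ne_of_gt hε)
    exact hbot x (by rw [hxQ, ← hQrange]; exact ⟨x, rfl⟩) hBx0
  -- left inverse from right inverse + injectivity
  have hleft : inv.comp (A + ε • B) = ContinuousLinearMap.id ℝ X := by
    ext x
    have h1 : (A + ε • B) (inv ((A + ε • B) x)) = (A + ε • B) x := by
      have := ContinuousLinearMap.ext_iff.mp hright ((A + ε • B) x)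
      simpa using this
    have h2 : (A + ε • B) (inv ((A + ε • B) x) - x) = 0 := by
      rw [map_sub, h1, sub_self]
    have := hinj _ h2
    rw [sub_eq_zero] at this
    simpa using this
  refine ⟨inv, hleft, hright, ?_⟩
  -- the bound
  have hdiff : R - inv = ((ε • ((S.comp B).comp S) + (T.comp B).comp S)).comp
      ((u⁻¹ : (Y →L[ℝ] Y)ˣ) : Y →L[ℝ] Y) := by
    have h0 : R.comp (M.comp ((u⁻¹ : (Y →L[ℝ] Y)ˣ) : Y →L[ℝ] Y))
        = ((ε • ((S.comp B).comp S) + (T.comp B).comp S)).comp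
          ((u⁻¹ : (Y →L[ℝ] Y)ˣ) : Y →L[ℝ] Y) := by
      rw [← ContinuousLinearMap.comp_assoc]
      congr 1
      ext y
      have hεne : ε ≠ 0 := ne_of_gt hε
      simp only [hR, hM, ContinuousLinearMap.comp_apply, ContinuousLinearMap.add_apply,
        ContinuousLinearMap.smul_apply, map_smul]
      rw [smul_add, smul_smul, mul_inv_cancel₀ hεne, one_smul]
    calc R - inv = R.comp (1 - ((u⁻¹ : (Y →L[ℝ] Y)ˣ) : Y →L[ℝ] Y)) := by
          rw [ContinuousLinearMap.comp_sub, ContinuousLinearMap.one_def, ContinuousLinearMap.comp_id, hinv]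
      _ = R.comp (M * ((u⁻¹ : (Y →L[ℝ] Y)ˣ) : Y →L[ℝ] Y)) := by
          congr 1
          conv_lhs => rw [huinv]
          abel
      _ = R.comp (M.comp ((u⁻¹ : (Y →L[ℝ] Y)ˣ) : Y →L[ℝ] Y)) := rfl
      _ = _ := h0
  rw [hdiff]
  calc ‖((ε • ((S.comp B).comp S) + (T.comp B).comp S)).comp
        ((u⁻¹ : (Y →L[ℝ] Y)ˣ) : Y →L[ℝ] Y)‖
      ≤ ‖ε • ((S.comp B).comp S) + (T.comp B).comp S‖ *
        ‖((u⁻¹ : (Y →L[ℝ] Y)ˣ) : Y →L[ℝ] Y)‖ := ContinuousLinearMap.opNorm_comp_le _ _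
    _ ≤ (ε * ‖(S.comp B).comp S‖ + ‖(T.comp B).comp S‖) * 2 := by
        apply mul_le_mul _ huinvnorm (norm_nonneg _) (by positivity)
        calc ‖ε • ((S.comp B).comp S) + (T.comp B).comp S‖
            ≤ ‖ε • ((S.comp B).comp S)‖ + ‖(T.comp B).comp S‖ := norm_add_le _ _
          _ ≤ ε * ‖(S.comp B).comp S‖ + ‖(T.comp B).comp S‖ := by
              gcongr
              refine le_trans (ContinuousLinearMap.opNorm_smul_le _ _) ?_
              rw [Real.norm_eq_abs, abs_of_pos hε]
    _ ≤ C := by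
        rw [hC]
        have h1 : ε * ‖(S.comp B).comp S‖ ≤ ‖(S.comp B).comp S‖ := by
          nlinarith [norm_nonneg ((S.comp B).comp S)]
        nlinarith [norm_nonneg ((T.comp B).comp S)]
end

section
/- Under the hypotheses of the perturbation lemma (A, B : X → Y bounded linear, dim N(A) < ∞, N(A) ∩ N(B) = {0}, Y = B·N(A) ⊕ R(A)), if the complement X̂ of N(A) is chosen as X̂ = B⁻¹R(A) = {x ∈ X : Bx ∈ R(A)}, then for every y ∈ R(A) one has ‖(A* − (A + εB)⁻¹)y‖ = O(ε) as ε → 0. -/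
/-- When the complement `X̂` of `N(A)` is chosen as
`X̂ = B⁻¹R(A) = {x : Bx ∈ R(A)}`, the operator `S = A*(Id - P)` satisfies,
for every `y ∈ R(A)`, `‖(A* - (A + εB)⁻¹) y‖ = O(ε)` as `ε → 0`. -/
theorem stmt5
    {X Y : Type*} [NormedAddCommGroup X] [NormedSpace ℝ X] [CompleteSpace X]
    [NormedAddCommGroup Y] [NormedSpace ℝ Y] [CompleteSpace Y]
    (A B : X →L[ℝ] Y) (P : Y →L[ℝ] Y) (S : Y →L[ℝ] X)
    (hfin : FiniteDimensional ℝ (LinearMap.ker (A : X →ₗ[ℝ] Y)))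
    (hker : LinearMap.ker (A : X →ₗ[ℝ] Y) ⊓ LinearMap.ker (B : X →ₗ[ℝ] Y) = ⊥)
    (hP : P.comp P = P)
    (hPrange : LinearMap.range (P : Y →ₗ[ℝ] Y) = Submodule.map (B : X →ₗ[ℝ] Y) (LinearMap.ker (A : X →ₗ[ℝ] Y)))
    (hPker : LinearMap.ker (P : Y →ₗ[ℝ] Y) = LinearMap.range (A : X →ₗ[ℝ] Y))
    -- `S` realizes `A*(Id - P)` with `X̂ = B⁻¹R(A)`: its values `S y` lie in
    -- `B⁻¹R(A)` and `A (S y) = (Id - P) y`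
    (hS1 : ∀ y : Y, B (S y) ∈ LinearMap.range (A : X →ₗ[ℝ] Y))
    (hS2 : ∀ y : Y, A (S y) = y - P y)
    (hS3 : ∀ y : Y, S (P y) = 0) :
    ∀ y ∈ LinearMap.range (A : X →ₗ[ℝ] Y), ∃ C > (0 : ℝ), ∃ ε₀ > (0 : ℝ),
      ∀ ε : ℝ, 0 < ε → ε < ε₀ →
        ∀ inv : Y →L[ℝ] X,
          inv.comp (A + ε • B) = ContinuousLinearMap.id ℝ X →
          (A + ε • B).comp inv = ContinuousLinearMap.id ℝ Y →
          ‖S y - inv y‖ ≤ C * ε := by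
  intro y hy
  set c : ℝ := ‖B‖ * ‖S‖ with hc
  have hc0 : 0 ≤ c := mul_nonneg (norm_nonneg _) (norm_nonneg _)
  refine ⟨2 * ‖S‖ * (c * ‖y‖) + 1, by positivity, 1 / (2 * (c + 1)), by positivity, ?_⟩
  intro ε hε hεlt inv hl hr
  have hP0 : ∀ z ∈ LinearMap.range (A : X →ₗ[ℝ] Y), P z = 0 := by
    intro z hz
    rw [← hPker] at hz
    exact hz
  have hεc : ε * c < 1 / 2 := by
    have h1 : ε * (c + 1) < (1 / (2 * (c + 1))) * (c + 1) := by
      apply mul_lt_mul_of_pos_right hεlt; linarith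
    have h2 : (1 / (2 * (c + 1))) * (c + 1) = 1 / 2 := by
      field_simp
    nlinarith
  have hεc0 : 0 ≤ ε * c := mul_nonneg hε.le hc0
  -- key identity
  have key : ∀ z ∈ LinearMap.range (A : X →ₗ[ℝ] Y), inv z = S z - ε • inv (B (S z)) := by
    intro z hz
    have h1 : (A + ε • B) (S z) = z + ε • B (S z) := by
      simp [ContinuousLinearMap.add_apply, hS2, hP0 z hz]
    have h2 : inv ((A + ε • B) (S z)) = S z := by
      have := congrArg (fun T : X →L[ℝ] X => T (S z)) hl
      simpa using this
    rw [h1, map_add, map_smul] at h2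
    exact eq_sub_of_add_eq h2
  have hBS : ∀ z : Y, ‖B (S z)‖ ≤ c * ‖z‖ := by
    intro z
    calc ‖B (S z)‖ ≤ ‖B‖ * ‖S z‖ := B.le_opNorm _
      _ ≤ ‖B‖ * (‖S‖ * ‖z‖) := by
          gcongr
          exact S.le_opNorm _
      _ = c * ‖z‖ := by rw [hc]; ring
  have bound : ∀ n : ℕ, ∀ z ∈ LinearMap.range (A : X →ₗ[ℝ] Y),
      ‖inv z‖ ≤ ‖S‖ * ‖z‖ * (∑ k ∈ Finset.range n, (ε * c) ^ k)
        + (ε * c) ^ n * (‖inv‖ * ‖z‖) := by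
    intro n
    induction n with
    | zero => intro z hz; simpa using inv.le_opNorm z
    | succ n ih =>
      intro z hz
      rw [key z hz]
      have hw := ih (B (S z)) (hS1 z)
      have hwn := hBS z
      have hsum : (0:ℝ) ≤ ∑ k ∈ Finset.range n, (ε * c) ^ k :=
        Finset.sum_nonneg fun k _ => pow_nonneg hεc0 k
      have hpow : (0:ℝ) ≤ (ε * c) ^ n := pow_nonneg hεc0 n
      have h1 : ‖S z - ε • inv (B (S z))‖ ≤ ‖S z‖ + ε * ‖inv (B (S z))‖ := by
        calc ‖S z - ε • inv (B (S z))‖ ≤ ‖S z‖ + ‖ε • inv (B (S z))‖ := norm_sub_le _ _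
          _ = ‖S z‖ + ε * ‖inv (B (S z))‖ := by
              rw [norm_smul, Real.norm_eq_abs, abs_of_pos hε]
      have hSz : ‖S z‖ ≤ ‖S‖ * ‖z‖ := S.le_opNorm _
      have hgeom : ∑ k ∈ Finset.range (n + 1), (ε * c) ^ k
          = (ε * c) * ∑ k ∈ Finset.range n, (ε * c) ^ k + 1 := geom_sum_succ
      rw [hgeom, pow_succ]
      have hinv0 : (0:ℝ) ≤ ‖inv‖ := norm_nonneg _
      have hS0 : (0:ℝ) ≤ ‖S‖ := norm_nonneg _
      have hBSw : ε * ‖inv (B (S z))‖ ≤ ε * (‖S‖ * (c * ‖z‖) * (∑ k ∈ Finset.range n, (ε * c) ^ k)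
          + (ε * c) ^ n * (‖inv‖ * (c * ‖z‖))) := by
        apply mul_le_mul_of_nonneg_left _ hε.le
        calc ‖inv (B (S z))‖ ≤ ‖S‖ * ‖B (S z)‖ * (∑ k ∈ Finset.range n, (ε * c) ^ k)
              + (ε * c) ^ n * (‖inv‖ * ‖B (S z)‖) := hw
          _ ≤ ‖S‖ * (c * ‖z‖) * (∑ k ∈ Finset.range n, (ε * c) ^ k)
              + (ε * c) ^ n * (‖inv‖ * (c * ‖z‖)) := by gcongr
      nlinarith [h1, hSz, hBSw]
  have bound2 : ∀ z ∈ LinearMap.range (A : X →ₗ[ℝ] Y), ‖inv z‖ ≤ 2 * ‖S‖ * ‖z‖ := by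
    intro z hz
    have hlim : Filter.Tendsto (fun n : ℕ => ‖S‖ * ‖z‖ * 2 + (ε * c) ^ n * (‖inv‖ * ‖z‖))
        Filter.atTop (nhds (‖S‖ * ‖z‖ * 2 + 0 * (‖inv‖ * ‖z‖))) := by
      apply Filter.Tendsto.add tendsto_const_nhds
      exact (tendsto_pow_atTop_nhds_zero_of_lt_one hεc0 (by linarith)).mul_const _
    have hle : ∀ n : ℕ, ‖inv z‖ ≤ ‖S‖ * ‖z‖ * 2 + (ε * c) ^ n * (‖inv‖ * ‖z‖) := by
      intro n
      refine le_trans (bound n z hz) ?_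
      have hgs : (∑ k ∈ Finset.range n, (ε * c) ^ k) ≤ 2 := by
        have hne : ε * c ≠ 1 := by linarith
        have hrn : (ε * c) ^ n ≤ 1 := pow_le_one₀ hεc0 (by linarith)
        have hrn0 : (0:ℝ) ≤ (ε * c) ^ n := pow_nonneg hεc0 n
        rw [geom_sum_eq hne n, div_le_iff_of_neg (by linarith : ε * c - 1 < 0)]
        nlinarith
      have := mul_le_mul_of_nonneg_left hgs
        (mul_nonneg (norm_nonneg S) (norm_nonneg z))
      linarith
    have h := ge_of_tendsto' hlim hle
    nlinarith [h]
  -- conclude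
  rw [key y hy]
  have h0 : ‖S y - (S y - ε • inv (B (S y)))‖ = ε * ‖inv (B (S y))‖ := by
    rw [show S y - (S y - ε • inv (B (S y))) = ε • inv (B (S y)) by abel,
      norm_smul, Real.norm_eq_abs, abs_of_pos hε]
  rw [h0]
  have h1 : ‖inv (B (S y))‖ ≤ 2 * ‖S‖ * (c * ‖y‖) := by
    refine le_trans (bound2 _ (hS1 y)) ?_
    have := hBS y
    nlinarith [norm_nonneg S]
  nlinarith [norm_nonneg (inv (B (S y)))]
end
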